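/- The generating function for partitions λ_1 ≥ ... ≥ λ_k ≥ 0 of n satisfying λ_i ≥ i·(λ_{i+1} + λ_{i+2} + ... + λ_k) for all 1 ≤ i ≤ k is Π_{j=1}^k (1 - q^{j!})^{-1}; i.e., the number of such partitions of n equals the number of k-tuples (s_1,...,s_k) ∈ ℕ^k with Σ_j j!·s_j = n. -/

import Mathlib

open Finset

private def tailSum {k : ℕ} (lam : Fin k → ℕ) (i : ℕ) : ℕ :=
  ∑ j ∈ Finset.univ.filter (fun j : Fin k => i ≤ (j : ℕ)), lam j

private def uFun {k : ℕ} (s : Fin k → ℕ) (i : ℕ) : ℕ :=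
  if h : i < k then s ⟨i, h⟩ + (i + 2) * uFun s (i + 1) else 0
termination_by k - i
decreasing_by omega

private def fFun {k : ℕ} (lam : Fin k → ℕ) : Fin k → ℕ :=
  fun i => tailSum lam (i : ℕ) - ((i : ℕ) + 2) * tailSum lam ((i : ℕ) + 1)

private def gFun {k : ℕ} (s : Fin k → ℕ) : Fin k → ℕ :=
  fun i => s i + ((i : ℕ) + 1) * uFun s ((i : ℕ) + 1)

private lemma downInd (k : ℕ) (P : ℕ → Prop) (h0 : ∀ i, k ≤ i → P i)
    (hstep : ∀ i, i < k → P (i + 1) → P i) : ∀ i, P i := by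
  have H : ∀ d i, k - i ≤ d → P i := by
    intro d
    induction d with
    | zero => intro i h; exact h0 i (by omega)
    | succ d ih =>
      intro i h
      by_cases hik : k ≤ i
      · exact h0 i hik
      · exact hstep i (by omega) (ih (i + 1) (by omega))
  exact fun i => H k i (by omega)

private lemma filter_sum_zero {k : ℕ} (f : Fin k → ℕ) {i : ℕ} (h : k ≤ i) :
    ∑ j ∈ Finset.univ.filter (fun j : Fin k => i ≤ (j : ℕ)), f j = 0 := by
  rw [Finset.filter_false_of_mem, Finset.sum_empty]
  intro j _
  have := j.isLt
  omega

private lemma filter_sum_succ {k : ℕ} (f : Fin k → ℕ) {i : ℕ} (h : i < k) :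
    ∑ j ∈ Finset.univ.filter (fun j : Fin k => i ≤ (j : ℕ)), f j
      = f ⟨i, h⟩ + ∑ j ∈ Finset.univ.filter (fun j : Fin k => i + 1 ≤ (j : ℕ)), f j := by
  have hset : Finset.univ.filter (fun j : Fin k => i ≤ (j : ℕ))
      = insert (⟨i, h⟩ : Fin k) (Finset.univ.filter (fun j : Fin k => i + 1 ≤ (j : ℕ))) := by
    ext j
    simp only [Finset.mem_filter, Finset.mem_univ, true_and, Finset.mem_insert, Fin.ext_iff]
    omega
  rw [hset, Finset.sum_insert]
  simp only [Finset.mem_filter, Finset.mem_univ, true_and]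
  omega

private lemma tailSum_zero {k : ℕ} (lam : Fin k → ℕ) {i : ℕ} (h : k ≤ i) :
    tailSum lam i = 0 := filter_sum_zero lam h

private lemma tailSum_succ {k : ℕ} (lam : Fin k → ℕ) {i : ℕ} (h : i < k) :
    tailSum lam i = lam ⟨i, h⟩ + tailSum lam (i + 1) := filter_sum_succ lam h

private lemma uFun_zero {k : ℕ} (s : Fin k → ℕ) {i : ℕ} (h : k ≤ i) :
    uFun s i = 0 := by
  rw [uFun, dif_neg (by omega)]

private lemma uFun_succ {k : ℕ} (s : Fin k → ℕ) {i : ℕ} (h : i < k) :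
    uFun s i = s ⟨i, h⟩ + (i + 2) * uFun s (i + 1) := by
  rw [uFun, dif_pos h]

private lemma tailSum_gFun {k : ℕ} (s : Fin k → ℕ) : ∀ i, tailSum (gFun s) i = uFun s i := by
  refine downInd k _ (fun i h => ?_) (fun i h ih => ?_)
  · rw [tailSum_zero _ h, uFun_zero _ h]
  · rw [tailSum_succ _ h, ih, uFun_succ _ h]
    show s ⟨i, h⟩ + (i + 1) * uFun s (i + 1) + uFun s (i + 1) = _
    ring

private lemma fact_uFun {k : ℕ} (s : Fin k → ℕ) :
    ∀ i, Nat.factorial (i + 1) * uFun s i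
      = ∑ j ∈ Finset.univ.filter (fun j : Fin k => i ≤ (j : ℕ)),
          Nat.factorial ((j : ℕ) + 1) * s j := by
  refine downInd k _ (fun i h => ?_) (fun i h ih => ?_)
  · rw [uFun_zero _ h, filter_sum_zero _ h, Nat.mul_zero]
  · rw [uFun_succ _ h, filter_sum_succ (fun j : Fin k => Nat.factorial ((j : ℕ) + 1) * s j) h,
      ← ih]
    show Nat.factorial (i + 1) * (s ⟨i, h⟩ + (i + 2) * uFun s (i + 1))
      = Nat.factorial (i + 1) * s ⟨i, h⟩ + Nat.factorial (i + 1 + 1) * uFun s (i + 1)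
    rw [Nat.factorial_succ (i + 1)]
    ring

private lemma antitone_of_cond {k : ℕ} (lam : Fin k → ℕ)
    (hc : ∀ i : Fin k, ((i : ℕ) + 1) * tailSum lam ((i : ℕ) + 1) ≤ lam i) :
    Antitone lam := by
  intro i j hij
  rcases eq_or_lt_of_le hij with rfl | hlt
  · exact le_rfl
  · have hj : lam j ≤ tailSum lam ((i : ℕ) + 1) := by
      refine Finset.single_le_sum (f := lam) (fun x _ => Nat.zero_le _) ?_
      simp only [Finset.mem_filter, Finset.mem_univ, true_and]
      exact hlt
    calc lam j ≤ tailSum lam ((i : ℕ) + 1) := hj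
      _ ≤ ((i : ℕ) + 1) * tailSum lam ((i : ℕ) + 1) := Nat.le_mul_of_pos_left _ (by omega)
      _ ≤ lam i := hc i

private lemma cond_rewrite {k : ℕ} (lam : Fin k → ℕ) (i : Fin k) :
    (∑ j ∈ Finset.univ.filter (fun j : Fin k => i < j), lam j)
      = tailSum lam ((i : ℕ) + 1) := by
  have hset : Finset.univ.filter (fun j : Fin k => i < j)
      = Finset.univ.filter (fun j : Fin k => (i : ℕ) + 1 ≤ (j : ℕ)) := by
    ext j
    simp only [Finset.mem_filter, Finset.mem_univ, true_and, Fin.lt_def]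
    omega
  rw [hset]
  rfl

theorem stmt_8 (k n : ℕ) :
    {lam : Fin k → ℕ | Antitone lam ∧
      (∀ i : Fin k, ((i : ℕ) + 1) *
          (∑ j ∈ Finset.univ.filter (fun j : Fin k => i < j), lam j) ≤ lam i) ∧
      ∑ i, lam i = n}.ncard =
    {s : Fin k → ℕ | ∑ i : Fin k, Nat.factorial ((i : ℕ) + 1) * s i = n}.ncard := by
  set A := {lam : Fin k → ℕ | Antitone lam ∧
      (∀ i : Fin k, ((i : ℕ) + 1) *
          (∑ j ∈ Finset.univ.filter (fun j : Fin k => i < j), lam j) ≤ lam i) ∧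
      ∑ i, lam i = n} with hA
  set B := {s : Fin k → ℕ | ∑ i : Fin k, Nat.factorial ((i : ℕ) + 1) * s i = n} with hB
  -- exactness for lam in A
  have hexact : ∀ lam : Fin k → ℕ,
      (∀ i : Fin k, ((i : ℕ) + 1) * tailSum lam ((i : ℕ) + 1) ≤ lam i) →
      ∀ i : ℕ, (h : i < k) → ((i : ℕ) + 2) * tailSum lam (i + 1) ≤ tailSum lam i := by
    intro lam hc i h
    have h1 := hc ⟨i, h⟩
    rw [tailSum_succ lam h]
    have : (i + 2) * tailSum lam (i + 1) = (i + 1) * tailSum lam (i + 1) + tailSum lam (i + 1) := by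
      ring
    simp only [Fin.val_mk] at h1 ⊢
    omega
  have hU_fFun : ∀ lam : Fin k → ℕ,
      (∀ i : Fin k, ((i : ℕ) + 1) * tailSum lam ((i : ℕ) + 1) ≤ lam i) →
      ∀ i, uFun (fFun lam) i = tailSum lam i := by
    intro lam hc
    refine downInd k _ (fun i h => ?_) (fun i h ih => ?_)
    · rw [uFun_zero _ h, tailSum_zero _ h]
    · rw [uFun_succ _ h, ih]
      show tailSum lam i - (i + 2) * tailSum lam (i + 1) + (i + 2) * tailSum lam (i + 1) = _
      have := hexact lam hc i h
      omega
  have hMapsF : Set.MapsTo fFun A B := by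
    intro lam hlam
    obtain ⟨-, hc, hsum⟩ := hlam
    have hc' : ∀ i : Fin k, ((i : ℕ) + 1) * tailSum lam ((i : ℕ) + 1) ≤ lam i := by
      intro i; rw [← cond_rewrite]; exact hc i
    have h1 := fact_uFun (fFun lam) 0
    rw [hU_fFun lam hc' 0] at h1
    have h2 : tailSum lam 0 = ∑ i, lam i := by
      unfold tailSum
      rw [show Finset.univ.filter (fun j : Fin k => 0 ≤ (j : ℕ)) = Finset.univ from by
        ext j; simp]
    rw [show Nat.factorial (0+1) = 1 from rfl, Nat.one_mul] at h1
    have h3 : Finset.univ.filter (fun j : Fin k => 0 ≤ (j : ℕ)) = Finset.univ := by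
      ext j; simp
    rw [h3] at h1
    show ∑ i : Fin k, Nat.factorial ((i : ℕ) + 1) * fFun lam i = n
    rw [← h1, h2, hsum]
  have hMapsG : Set.MapsTo gFun B A := by
    intro s hs
    have hcg : ∀ i : Fin k, ((i : ℕ) + 1) * tailSum (gFun s) ((i : ℕ) + 1) ≤ gFun s i := by
      intro i
      rw [tailSum_gFun]
      show ((i : ℕ) + 1) * uFun s ((i : ℕ) + 1) ≤ s i + ((i : ℕ) + 1) * uFun s ((i : ℕ) + 1)
      omega
    refine ⟨antitone_of_cond _ hcg, fun i => ?_, ?_⟩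
    · rw [cond_rewrite]; exact hcg i
    · have h1 := fact_uFun s 0
      have h3 : Finset.univ.filter (fun j : Fin k => 0 ≤ (j : ℕ)) = Finset.univ := by
        ext j; simp
      rw [h3] at h1
      rw [show Nat.factorial (0+1) = 1 from rfl, Nat.one_mul] at h1
      have h2 : tailSum (gFun s) 0 = ∑ i, gFun s i := by
        unfold tailSum
        rw [show Finset.univ.filter (fun j : Fin k => 0 ≤ (j : ℕ)) = Finset.univ from by
          ext j; simp]
      rw [← h2, tailSum_gFun, h1]
      exact hs
  have hGF : ∀ lam ∈ A, gFun (fFun lam) = lam := by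
    intro lam hlam
    obtain ⟨-, hc, -⟩ := hlam
    have hc' : ∀ i : Fin k, ((i : ℕ) + 1) * tailSum lam ((i : ℕ) + 1) ≤ lam i := by
      intro i; rw [← cond_rewrite]; exact hc i
    funext i
    show fFun lam i + ((i : ℕ) + 1) * uFun (fFun lam) ((i : ℕ) + 1) = lam i
    rw [hU_fFun lam hc']
    show tailSum lam (i : ℕ) - ((i : ℕ) + 2) * tailSum lam ((i : ℕ) + 1)
        + ((i : ℕ) + 1) * tailSum lam ((i : ℕ) + 1) = lam i
    have h1 := hexact lam hc' (i : ℕ) i.isLt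
    have h2 := tailSum_succ lam i.isLt
    have h3 : ((i : ℕ) + 2) * tailSum lam ((i : ℕ) + 1)
        = ((i : ℕ) + 1) * tailSum lam ((i : ℕ) + 1) + tailSum lam ((i : ℕ) + 1) := by ring
    have h4 : lam ⟨(i : ℕ), i.isLt⟩ = lam i := by congr 1
    rw [h4] at h2
    omega
  have hFG : ∀ s : Fin k → ℕ, fFun (gFun s) = s := by
    intro s
    funext i
    show tailSum (gFun s) (i : ℕ) - ((i : ℕ) + 2) * tailSum (gFun s) ((i : ℕ) + 1) = s i
    rw [tailSum_gFun, tailSum_gFun, uFun_succ s i.isLt]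
    have h4 : s ⟨(i : ℕ), i.isLt⟩ = s i := by congr 1
    rw [h4]
    omega
  have hbij : Set.BijOn fFun A B := by
    refine Set.InvOn.bijOn ⟨fun lam hlam => hGF lam hlam, fun s _ => hFG s⟩ hMapsF hMapsG
  rw [← hbij.image_eq, Set.ncard_image_of_injOn hbij.injOn]
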